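/- Let G be a subgroup of the additive group ℚ containing ℤ, and for each prime p set G_p = {x ∈ G : pⁿ·x ∈ ℤ for some n ≥ 0}. Then the following are equivalent: (i) G is dual automorphism-invariant as a ℤ-module; (ii) the set of primes p for which G_p = ℤ is infinite; (iii) the Jacobson radical J(G) (the sum of all small subgroups of G, equivalently the intersection of all maximal subgroups) is zero. -/

import Mathlib

open LinearMap Submodule

/-- A submodule N of M is small (superfluous) in M:
N + K = M implies K = M for every submodule K. -/
def IsSmall {R : Type*} [Ring R] {M : Type*} [AddCommGroup M] [Module R M]
    (N : Submodule R M) : Prop :=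
  ∀ K : Submodule R M, N ⊔ K = ⊤ → K = ⊤

/-- M is a dual automorphism-invariant R-module: for any two small submodules
K₁, K₂ of M, every surjective homomorphism η : M/K₁ → M/K₂ whose kernel is
small in M/K₁ lifts to an endomorphism φ of M (i.e. π₂ ∘ φ = η ∘ π₁). -/
def IsDualAutoInv (R M : Type*) [Ring R] [AddCommGroup M] [Module R M] : Prop :=
  ∀ (K₁ K₂ : Submodule R M), IsSmall K₁ → IsSmall K₂ →
    ∀ η : (M ⧸ K₁) →ₗ[R] (M ⧸ K₂), Function.Surjective η →
      IsSmall (LinearMap.ker η) →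
      ∃ φ : M →ₗ[R] M, K₂.mkQ ∘ₗ φ = η ∘ₗ K₁.mkQ

lemma isSmall_bot {R : Type*} [Ring R] {M : Type*} [AddCommGroup M] [Module R M] :
    IsSmall (⊥ : Submodule R M) := fun K hK => by simpa using hK

section Aux
variable {G : AddSubgroup ℚ}

lemma bezout_div_mem (hZ : ∀ m : ℤ, (m : ℚ) ∈ G) {p : ℕ} (hp : p.Prime) {m : ℤ}
    (hpm : ¬ (p:ℤ) ∣ m) {z : ℚ} (hz : z ∈ G) (hzm : (p:ℚ) * z = m) : (1:ℚ)/p ∈ G := by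
  have hp0 : (p:ℚ) ≠ 0 := Nat.cast_ne_zero.mpr hp.pos.ne'
  have hcop : IsCoprime ((p:ℤ)) m := (Nat.prime_iff_prime_int.mp hp).coprime_iff_not_dvd.mpr hpm
  obtain ⟨u, v, huv⟩ := hcop
  have key : (1:ℚ)/p = (u:ℚ) + (v:ℤ) • z := by
    have : ((u * p + v * m : ℤ) : ℚ) = 1 := by exact_mod_cast congrArg (fun t : ℤ => (t:ℚ)) huv
    push_cast at this
    rw [zsmul_eq_mul, div_eq_iff hp0]
    linear_combination (-1 : ℚ) * this - (v:ℚ) * hzm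
  rw [key]
  exact G.add_mem (hZ u) (AddSubgroup.zsmul_mem G hz v)

lemma pred_iff (hZ : ∀ m : ℤ, (m : ℚ) ∈ G) {p : ℕ} (hp : p.Prime) :
    (∀ x : ℚ, x ∈ G → (∃ (n : ℕ) (m : ℤ), (p : ℚ) ^ n * x = (m : ℚ)) → ∃ m : ℤ, x = (m : ℚ)) ↔
    (1:ℚ)/p ∉ G := by
  have hp0 : (p:ℚ) ≠ 0 := Nat.cast_ne_zero.mpr hp.pos.ne'
  constructor
  · intro h h1p
    obtain ⟨m, hm⟩ := h ((1:ℚ)/p) h1p ⟨1, 1, by field_simp; simp⟩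
    have h1 : (m : ℚ) * p = 1 := by rw [← hm]; field_simp
    have h2 : (m * (p:ℤ) : ℤ) = 1 := by exact_mod_cast h1
    have h3 : (p:ℤ) ∣ 1 := Dvd.intro_left m h2
    have := Int.le_of_dvd one_pos h3
    have := hp.two_le
    omega
  · intro h1p x hx hex
    obtain ⟨n, m, hnm⟩ := hex
    induction n generalizing m with
    | zero => exact ⟨m, by simpa using hnm⟩
    | succ n ih =>
      by_cases hpm : (p:ℤ) ∣ m
      · obtain ⟨m', rfl⟩ := hpm
        refine ih m' ?_
        have h4 : (p:ℚ) * ((p:ℚ)^n * x) = (p:ℚ) * m' := by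
          push_cast at hnm ⊢; linear_combination hnm
        exact mul_left_cancel₀ hp0 h4
      · exfalso
        have hzG : (p:ℚ)^n * x ∈ G := by
          have := AddSubgroup.zsmul_mem G hx ((p:ℤ)^n)
          have he : ((p:ℤ)^n) • x = (p:ℚ)^n * x := by
            rw [zsmul_eq_mul]; push_cast; ring
          rwa [he] at this
        refine h1p (bezout_div_mem hZ hp hpm hzG ?_)
        push_cast at hnm ⊢
        linear_combination hnm

/-- The submodule {g ∈ G : g/p ∈ G} (equal to pG when 1/p ∉ G makes it proper). -/
def Mp (G : AddSubgroup ℚ) (p : ℕ) : Submodule ℤ ↥G where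
  carrier := {g | (g:ℚ)/p ∈ G}
  add_mem' := by
    intro g h hg hh
    show ((g : ℚ) + (h : ℚ))/p ∈ G
    rw [add_div]; exact G.add_mem hg hh
  zero_mem' := by
    show ((0:ℚ))/p ∈ G
    simpa using G.zero_mem
  smul_mem' := by
    intro c g hg
    show ((c • g : ↥G) : ℚ)/p ∈ G
    have h1 : ((c • g : ↥G) : ℚ) = (c:ℚ) * (g:ℚ) := by push_cast; rw [zsmul_eq_mul]
    have h2 : ((c • g : ↥G) : ℚ)/p = c • ((g:ℚ)/p) := by
      rw [h1, zsmul_eq_mul]; ring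
    rw [h2]; exact AddSubgroup.zsmul_mem G hg c

lemma mem_Mp {G : AddSubgroup ℚ} {p : ℕ} {g : ↥G} : g ∈ Mp G p ↔ (g:ℚ)/p ∈ G := Iff.rfl

end Aux

section Aux2
variable {G : AddSubgroup ℚ}

lemma Mp_max {p : ℕ} (pp : p.Prime) (W : Submodule ℤ ↥G) (hW : Mp G p ≤ W)
    (w : ↥G) (hwW : w ∈ W) (hw : w ∉ Mp G p) : W = ⊤ := by
  have hp0 : (p:ℚ) ≠ 0 := Nat.cast_ne_zero.mpr pp.pos.ne'
  have hw0 : (w:ℚ) ≠ 0 := by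
    intro h0
    exact hw (by rw [mem_Mp, h0]; simpa using G.zero_mem)
  rw [eq_top_iff]
  rintro g -
  by_cases hg0 : (g:ℚ) = 0
  · have hg : g = 0 := by
      apply Subtype.ext; exact hg0
    rw [hg]; exact W.zero_mem
  set c : ℚ := (g:ℚ) / (w:ℚ) with hc
  have hden0 : ((c.den:ℚ)) ≠ 0 := Nat.cast_ne_zero.mpr c.den_nz
  have hrel : (c.den:ℚ) * (g:ℚ) = (c.num:ℚ) * (w:ℚ) := by
    have h1 : (c.num:ℚ) / (c.den:ℚ) = (g:ℚ) / (w:ℚ) := by rw [Rat.num_div_den]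
    field_simp at h1
    linarith
  have hrelG : (c.den:ℤ) • g = c.num • w := by
    apply Subtype.ext
    push_cast [zsmul_eq_mul]
    exact hrel
  by_cases hpd : (p:ℤ) ∣ (c.den:ℤ)
  · -- then p ∤ c.num, and w ∈ Mp G p : contradiction
    exfalso
    have hpnum : ¬ (p:ℤ) ∣ c.num := by
      intro hdvd
      have h1 : p ∣ c.num.natAbs := by simpa using Int.natAbs_dvd_natAbs.mpr hdvd
      have h2 : p ∣ c.den := by simpa using Int.natAbs_dvd_natAbs.mpr hpd
      have := Nat.dvd_gcd h1 h2
      rw [c.reduced] at this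
      exact pp.one_lt.ne' (Nat.dvd_one.mp this)
    obtain ⟨d, hd⟩ := hpd
    obtain ⟨u, v, huv⟩ := (Nat.prime_iff_prime_int.mp pp).coprime_iff_not_dvd.mpr hpnum
    apply hw
    rw [mem_Mp]
    have huvQ : (u:ℚ) * p + (v:ℚ) * c.num = 1 := by exact_mod_cast huv
    have hdQ : ((c.den:ℚ)) = (p:ℚ) * (d:ℚ) := by exact_mod_cast hd
    have hval : (w:ℚ)/p = (u:ℤ) • (w:ℚ) + ((v*d : ℤ)) • (g:ℚ) := by
      rw [zsmul_eq_mul, zsmul_eq_mul, div_eq_iff hp0]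
      push_cast
      linear_combination (-(w:ℚ)) * huvQ + (-(v:ℚ)) * hrel + (v:ℚ)*(g:ℚ) * hdQ
    rw [hval]
    exact G.add_mem (AddSubgroup.zsmul_mem G w.2 u) (AddSubgroup.zsmul_mem G g.2 (v*d))
  · obtain ⟨u, v, huv⟩ := (Nat.prime_iff_prime_int.mp pp).coprime_iff_not_dvd.mpr hpd
    -- g = (u*p) • g + v • (den • g) and (u*p) • g ∈ Mp
    have hkey : g = v • ((c.den:ℤ) • g) + (u*p) • g := by
      rw [← mul_smul, ← add_smul]
      have : v * (c.den:ℤ) + u * p = 1 := by linarith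
      rw [this, one_smul]
    rw [hkey]
    refine W.add_mem ?_ (hW ?_)
    · rw [hrelG]
      exact W.smul_mem v (W.smul_mem c.num hwW)
    · rw [mem_Mp]
      have hval : (((u*p : ℤ) • g : ↥G) : ℚ)/p = (u:ℤ) • (g:ℚ) := by
        push_cast [zsmul_eq_mul]
        field_simp
      rw [hval]
      exact AddSubgroup.zsmul_mem G g.2 u

lemma one_mem_G (hZ : ∀ m : ℤ, (m : ℚ) ∈ G) : (1:ℚ) ∈ G := by
  simpa using hZ 1

lemma small_le_Mp {p : ℕ} (pp : p.Prime) (hpG : (1:ℚ)/p ∉ G)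
    {N : Submodule ℤ ↥G} (hZ : ∀ m : ℤ, (m : ℚ) ∈ G) (hN : IsSmall N) : N ≤ Mp G p := by
  by_contra hle
  obtain ⟨x, hxN, hxM⟩ := SetLike.not_le_iff_exists.mp hle
  have htop : N ⊔ Mp G p = ⊤ :=
    Mp_max pp (N ⊔ Mp G p) le_sup_right x (le_sup_left (a := N) hxN) hxM
  have hMp := hN (Mp G p) htop
  have h1 : (⟨1, one_mem_G hZ⟩ : ↥G) ∈ Mp G p := hMp ▸ mem_top
  exact hpG (mem_Mp.mp h1)

lemma small_eq_bot (hZ : ∀ m : ℤ, (m : ℚ) ∈ G)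
    (hinf : {p : ℕ | p.Prime ∧ (1:ℚ)/p ∉ G}.Infinite)
    {N : Submodule ℤ ↥G} (hN : IsSmall N) : N = ⊥ := by
  rw [eq_bot_iff]
  intro x hx
  rw [Submodule.mem_bot]
  by_contra hx0
  have hc0 : (x:ℚ) ≠ 0 := fun h => hx0 (Subtype.ext h)
  set c : ℚ := (x:ℚ) with hc
  have hnum0 : c.num ≠ 0 := Rat.num_ne_zero.mpr hc0
  obtain ⟨p, hpS, hpgt⟩ := hinf.exists_gt c.num.natAbs
  obtain ⟨pp, hpG⟩ := hpS
  have hxMp : x ∈ Mp G p := small_le_Mp pp hpG hZ hN hx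
  rw [mem_Mp] at hxMp
  have hp0 : (p:ℚ) ≠ 0 := Nat.cast_ne_zero.mpr pp.pos.ne'
  have hden0 : ((c.den:ℚ)) ≠ 0 := Nat.cast_ne_zero.mpr c.den_nz
  -- (c.num : ℚ)/p ∈ G
  have hz : (c.num:ℚ)/p ∈ G := by
    have hnd : (c.num:ℚ) = c * c.den := (div_eq_iff hden0).mp (Rat.num_div_den c)
    have h1 : (c.num:ℚ)/p = (c.den:ℤ) • (c/p) := by
      rw [zsmul_eq_mul]
      push_cast
      rw [hnd]
      ring
    rw [h1]
    exact AddSubgroup.zsmul_mem G hxMp _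
  have hpnum : ¬ (p:ℤ) ∣ c.num := by
    intro hdvd
    have h1 : p ∣ c.num.natAbs := by simpa using Int.natAbs_dvd_natAbs.mpr hdvd
    have := Nat.le_of_dvd (Int.natAbs_pos.mpr hnum0) h1
    omega
  exact hpG (bezout_div_mem hZ pp hpnum hz (by field_simp))

end Aux2

section Tor
variable {G : AddSubgroup ℚ} (a : ↥G)

/-- The 3-primary torsion submodule of G/⟨a⟩. -/
def tor3 : Submodule ℤ (↥G ⧸ (span ℤ {a})) where
  carrier := {y | ∃ k : ℕ, ((3:ℤ)^k) • y = 0}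
  add_mem' := by
    rintro y z ⟨k, hk⟩ ⟨l, hl⟩
    refine ⟨k + l, ?_⟩
    have hy' : ((3:ℤ)^(k+l)) • y = 0 := by rw [pow_add, mul_comm, mul_smul, hk, smul_zero]
    have hz' : ((3:ℤ)^(k+l)) • z = 0 := by rw [pow_add, mul_smul, hl, smul_zero]
    rw [smul_add, hy', hz', add_zero]
  zero_mem' := ⟨0, smul_zero _⟩
  smul_mem' := by
    rintro c y ⟨k, hk⟩
    exact ⟨k, by rw [smul_comm, hk, smul_zero]⟩

/-- The prime-to-3 torsion submodule of G/⟨a⟩. -/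
def cotor3 : Submodule ℤ (↥G ⧸ (span ℤ {a})) where
  carrier := {y | ∃ m : ℤ, IsCoprime 3 m ∧ m • y = 0}
  add_mem' := by
    rintro y z ⟨m, hm, hmy⟩ ⟨l, hl, hlz⟩
    refine ⟨m * l, hm.mul_right hl, ?_⟩
    have hy' : (m * l) • y = 0 := by rw [mul_comm, mul_smul, hmy, smul_zero]
    have hz' : (m * l) • z = 0 := by rw [mul_smul, hlz, smul_zero]
    rw [smul_add, hy', hz', add_zero]
  zero_mem' := ⟨1, isCoprime_one_right, smul_zero _⟩
  smul_mem' := by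
    rintro c y ⟨m, hm, hmy⟩
    exact ⟨m, hm, by rw [smul_comm, hmy, smul_zero]⟩

lemma mem_tor3 {y : ↥G ⧸ (span ℤ {a})} : y ∈ tor3 a ↔ ∃ k : ℕ, ((3:ℤ)^k) • y = 0 := Iff.rfl
lemma mem_cotor3 {y : ↥G ⧸ (span ℤ {a})} :
    y ∈ cotor3 a ↔ ∃ m : ℤ, IsCoprime 3 m ∧ m • y = 0 := Iff.rfl

lemma tor3_disjoint : Disjoint (tor3 a) (cotor3 a) := by
  rw [Submodule.disjoint_def]
  rintro y ⟨k, hk⟩ ⟨m, hm, hmy⟩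
  obtain ⟨u, v, huv⟩ := hm.pow_left (m := k)
  calc y = ((u * 3^k + v * m)) • y := by rw [huv, one_smul]
  _ = u • (((3:ℤ)^k) • y) + v • (m • y) := by rw [add_smul, mul_smul, mul_smul]
  _ = 0 := by rw [hk, hmy, smul_zero, smul_zero, add_zero]

lemma tor3_codisjoint (htor : ∀ y : ↥G ⧸ (span ℤ {a}), ∃ N : ℕ, N ≠ 0 ∧ (N:ℤ) • y = 0) :
    Codisjoint (tor3 a) (cotor3 a) := by
  rw [codisjoint_iff, eq_top_iff]
  rintro y -
  obtain ⟨N, hN0, hNy⟩ := htor y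
  set k := N.factorization 3 with hk
  set m := N / 3^k with hm
  have hNm : 3^k * m = N := Nat.ordProj_mul_ordCompl_eq_self N 3
  have h3m : ¬ 3 ∣ m := Nat.not_dvd_ordCompl (by norm_num) hN0
  have hcop : IsCoprime (3:ℤ) (m:ℤ) :=
    (Int.prime_three.coprime_iff_not_dvd).mpr (by exact_mod_cast h3m)
  obtain ⟨u, v, huv⟩ := hcop.pow_left (m := k)
  have hsplit : y = v • ((m:ℤ) • y) + u • (((3:ℤ)^k) • y) := by
    rw [← mul_smul, ← mul_smul, ← add_smul]
    have h1 : v * (m:ℤ) + u * (3:ℤ)^k = 1 := by linarith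
    rw [h1, one_smul]
  have h1 : (m:ℤ) • y ∈ tor3 a := by
    refine ⟨k, ?_⟩
    rw [← mul_smul]
    have h2 : ((3:ℤ)^k * m : ℤ) = (N:ℤ) := by exact_mod_cast congrArg (Nat.cast : ℕ → ℤ) hNm
    rw [h2, hNy]
  have h2 : ((3:ℤ)^k) • y ∈ cotor3 a := by
    refine ⟨(m:ℤ), hcop, ?_⟩
    rw [← mul_smul]
    have h3 : ((m : ℤ) * (3:ℤ)^k) = (N:ℤ) := by push_cast [← hNm]; ring
    rw [h3, hNy]
  rw [hsplit]
  exact Submodule.add_mem_sup ((tor3 a).smul_mem v h1) ((cotor3 a).smul_mem u h2)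

lemma tor3_isCompl (htor : ∀ y : ↥G ⧸ (span ℤ {a}), ∃ N : ℕ, N ≠ 0 ∧ (N:ℤ) • y = 0) :
    IsCompl (tor3 a) (cotor3 a) :=
  ⟨tor3_disjoint a, tor3_codisjoint a htor⟩

/-- The endomorphism acting as multiplication by 2 on 3-primary torsion and
identity on prime-to-3 torsion. -/
noncomputable def eta3 (h : IsCompl (tor3 a) (cotor3 a)) :
    (↥G ⧸ (span ℤ {a})) →ₗ[ℤ] (↥G ⧸ (span ℤ {a})) :=
  LinearMap.id + (tor3 a).subtype ∘ₗ (tor3 a).projectionOnto (cotor3 a) h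

lemma eta3_apply_tor (h : IsCompl (tor3 a) (cotor3 a)) {y : ↥G ⧸ (span ℤ {a})}
    (hy : y ∈ tor3 a) : eta3 a h y = y + y := by
  simp only [eta3, LinearMap.add_apply, LinearMap.id_apply, LinearMap.comp_apply,
    Submodule.subtype_apply]
  rw [show y = ((⟨y, hy⟩ : tor3 a) : ↥G ⧸ (span ℤ {a})) from rfl,
    Submodule.projectionOnto_apply_left]

lemma eta3_apply_cotor (h : IsCompl (tor3 a) (cotor3 a)) {y : ↥G ⧸ (span ℤ {a})}
    (hy : y ∈ cotor3 a) : eta3 a h y = y := by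
  simp only [eta3, LinearMap.add_apply, LinearMap.id_apply, LinearMap.comp_apply,
    Submodule.subtype_apply]
  rw [show y = ((⟨y, hy⟩ : cotor3 a) : ↥G ⧸ (span ℤ {a})) from rfl,
    Submodule.projectionOnto_apply_right]
  simp

lemma coprime_two_pow_three (k : ℕ) : IsCoprime (2:ℤ) ((3:ℤ)^k) :=
  (Int.prime_two.coprime_iff_not_dvd.mpr (by decide)).pow_right

lemma two_inv_tor {y : ↥G ⧸ (span ℤ {a})} (hy : y ∈ tor3 a) (h2 : (2:ℤ) • y = 0) : y = 0 := by
  obtain ⟨k, hk⟩ := hy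
  obtain ⟨u, v, huv⟩ := coprime_two_pow_three k
  calc y = ((u * 2 + v * 3^k)) • y := by rw [huv, one_smul]
  _ = u • ((2:ℤ) • y) + v • (((3:ℤ)^k) • y) := by rw [add_smul, mul_smul, mul_smul]
  _ = 0 := by rw [hk, h2, smul_zero, smul_zero, add_zero]

lemma eta3_surj (h : IsCompl (tor3 a) (cotor3 a)) : Function.Surjective (eta3 a h) := by
  intro y
  have hy : y ∈ tor3 a ⊔ cotor3 a := by rw [codisjoint_iff.mp h.codisjoint]; trivial
  obtain ⟨u, hu, v, hv, rfl⟩ := Submodule.mem_sup.mp hy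
  obtain ⟨k, hk⟩ := hu
  obtain ⟨d, e, hde⟩ := coprime_two_pow_three k
  refine ⟨d • u + v, ?_⟩
  have hdu : d • u ∈ tor3 a := (tor3 a).smul_mem d ⟨k, hk⟩
  rw [map_add, eta3_apply_tor a h hdu, eta3_apply_cotor a h hv]
  have key : d • u + d • u = u := by
    calc d • u + d • u = (d * 2) • u := by rw [mul_smul, two_smul, smul_add]
    _ = (1 - e * 3^k) • u := by
        have : d * 2 = 1 - e * 3^k := by linarith
        rw [this]
    _ = u - e • (((3:ℤ)^k) • u) := by rw [sub_smul, one_smul, mul_smul]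
    _ = u := by rw [hk, smul_zero, sub_zero]
  rw [key]

lemma eta3_ker (h : IsCompl (tor3 a) (cotor3 a)) : LinearMap.ker (eta3 a h) = ⊥ := by
  rw [eq_bot_iff]
  intro y hy
  rw [LinearMap.mem_ker] at hy
  have hmem : y ∈ tor3 a ⊔ cotor3 a := by rw [codisjoint_iff.mp h.codisjoint]; trivial
  obtain ⟨u, hu, v, hv, rfl⟩ := Submodule.mem_sup.mp hmem
  rw [map_add, eta3_apply_tor a h hu, eta3_apply_cotor a h hv] at hy
  have huu : u + u ∈ tor3 a := (tor3 a).add_mem hu hu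
  have hvv : u + u = -v := by rw [eq_neg_iff_add_eq_zero]; exact hy
  have hz : u + u = 0 :=
    Submodule.disjoint_def.mp (tor3_disjoint a) (u + u) huu (hvv ▸ (cotor3 a).neg_mem hv)
  have hu0 : u = 0 := two_inv_tor a hu (by rw [two_smul]; exact hz)
  have hv0 : v = 0 := by rw [hu0] at hvv; simpa using hvv.symm
  rw [hu0, hv0]
  simp

end Tor

section Finite
variable {G : AddSubgroup ℚ}

lemma main_finite (hZ : ∀ m : ℤ, (m : ℚ) ∈ G)
    (hfin : {p : ℕ | p.Prime ∧ (1:ℚ)/p ∉ G}.Finite) :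
    ∃ N : Submodule ℤ ↥G, IsSmall N ∧ N ≠ ⊥ ∧ ¬ IsDualAutoInv ℤ ↥G := by
  classical
  set S : Finset ℕ := hfin.toFinset with hS
  set b : ℕ := ∏ p ∈ S, p with hb
  have hb0 : 0 < b := Finset.prod_pos (fun p hp => (hfin.mem_toFinset.mp hp).1.pos)
  set a : ℕ := 3 * b with ha
  have ha0 : 0 < a := by positivity
  have haQ0 : ((a:ℚ)) ≠ 0 := Nat.cast_ne_zero.mpr ha0.ne'
  have hbQ0 : ((b:ℚ)) ≠ 0 := Nat.cast_ne_zero.mpr hb0.ne'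
  have haG : ((a:ℕ):ℚ) ∈ G := by exact_mod_cast hZ (a:ℤ)
  set aelt : ↥G := ⟨(a:ℚ), haG⟩ with haelt
  have hdiv : ∀ q : ℕ, q.Prime → ((a:ℚ)/q ∈ G) := by
    intro q hq
    have hq0 : ((q:ℚ)) ≠ 0 := Nat.cast_ne_zero.mpr hq.pos.ne'
    by_cases hqS : q ∈ S
    · obtain ⟨c, hc⟩ : q ∣ b := Finset.dvd_prod_of_mem id hqS
      have : (a:ℚ)/q = ((3*c : ℕ):ℚ) := by
        rw [div_eq_iff hq0]
        push_cast [ha, hc]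
        ring
      rw [this]
      exact_mod_cast hZ ((3*c : ℕ):ℤ)
    · by_cases hq3 : q = 3
      · have : (a:ℚ)/(q:ℕ) = ((b : ℕ):ℚ) := by
          rw [div_eq_iff hq0]
          push_cast [ha, hq3]
          ring
        rw [this]
        exact_mod_cast hZ ((b:ℕ):ℤ)
      · have hqG : (1:ℚ)/q ∈ G := by
          by_contra h
          exact hqS (hfin.mem_toFinset.mpr ⟨hq, h⟩)
        have : (a:ℚ)/q = ((a:ℕ):ℤ) • ((1:ℚ)/q) := by
          rw [zsmul_eq_mul]; push_cast; ring
        rw [this]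
        exact AddSubgroup.zsmul_mem G hqG _
  have hxq : ∀ q : ℕ, q.Prime → ∃ xq : ↥G, ((xq:ℚ) = (a:ℚ)/q ∧ (q:ℤ) • xq = aelt) := by
    intro q hq
    have hq0 : ((q:ℚ)) ≠ 0 := Nat.cast_ne_zero.mpr hq.pos.ne'
    refine ⟨⟨(a:ℚ)/q, hdiv q hq⟩, rfl, ?_⟩
    apply Subtype.ext
    push_cast [zsmul_eq_mul]
    field_simp
    rfl
  set Ka : Submodule ℤ ↥G := span ℤ {aelt} with hKa
  -- Ka is small
  have hsmall : IsSmall Ka := by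
    intro K hK
    let I : Ideal ℤ :=
      { carrier := {m : ℤ | m • aelt ∈ K}
        add_mem' := fun {x y} hx hy => by
          have := K.add_mem hx hy
          simpa [add_smul] using this
        zero_mem' := by
          show (0:ℤ) • aelt ∈ K
          simpa using K.zero_mem
        smul_mem' := fun c {x} hx => by
          have := K.smul_mem c hx
          show (c • x) • aelt ∈ K
          simpa [smul_eq_mul, mul_smul] using this }
    obtain ⟨n, hn⟩ : ∃ n : ℤ, I = Ideal.span {n} :=
      ⟨Submodule.IsPrincipal.generator I, (Ideal.span_singleton_generator I).symm⟩
    have hmem : ∀ m : ℤ, m • aelt ∈ K ↔ n ∣ m := fun m => by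
      rw [show (m • aelt ∈ K) ↔ m ∈ I from Iff.rfl, hn, Ideal.mem_span_singleton]
    have hqn : ∀ q : ℕ, q.Prime → ∃ m : ℤ, n ∣ 1 - q * m := by
      intro q hq
      obtain ⟨xq, hxv, hxs⟩ := hxq q hq
      have hxtop : xq ∈ Ka ⊔ K := by rw [hK]; trivial
      obtain ⟨y, hy, z, hz, hyz⟩ := Submodule.mem_sup.mp hxtop
      obtain ⟨m, rfl⟩ := Submodule.mem_span_singleton.mp hy
      refine ⟨m, ?_⟩
      rw [← hmem]
      have hzxq : z = xq - m • aelt := by rw [← hyz]; abel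
      have hzeq : (1 - q*m) • aelt = (q:ℤ) • z := by
        rw [hzxq, smul_sub, hxs, ← mul_smul, sub_smul, one_smul]
      rw [hzeq]
      exact K.smul_mem _ hz
    have hunit : IsUnit n := by
      by_contra hu
      obtain ⟨P, hP, hPn⟩ :=
        Int.exists_prime_and_dvd (fun h => hu (Int.isUnit_iff_natAbs_eq.mpr h))
      obtain ⟨m, hm⟩ := hqn P.natAbs (Int.prime_iff_natAbs_prime.mp hP)
      have hPq : P ∣ (P.natAbs : ℤ) := (Int.dvd_natAbs).mpr dvd_rfl
      have hP1 : P ∣ 1 := by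
        have h1 : P ∣ 1 - (P.natAbs:ℤ) * m := hPn.trans hm
        have h2 : P ∣ (P.natAbs:ℤ) * m := hPq.mul_right m
        simpa using dvd_add h1 h2
      exact hP.not_unit (isUnit_of_dvd_one hP1)
    have haK : aelt ∈ K := by
      have := (hmem 1).mpr hunit.dvd
      simpa using this
    have hle : Ka ≤ K := (span_singleton_le_iff_mem _ _).mpr haK
    calc K = Ka ⊔ K := (sup_eq_right.mpr hle).symm
    _ = ⊤ := hK
  have hKa_ne : Ka ≠ ⊥ := by
    intro h
    have : aelt ∈ (⊥ : Submodule ℤ ↥G) := h ▸ mem_span_singleton_self aelt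
    rw [Submodule.mem_bot] at this
    exact haQ0 (by simpa [haelt] using congrArg Subtype.val this)
  refine ⟨Ka, hsmall, hKa_ne, ?_⟩
  intro hd
  -- the quotient is torsion
  have htor : ∀ y : ↥G ⧸ (span ℤ {aelt}), ∃ N : ℕ, N ≠ 0 ∧ (N:ℤ) • y = 0 := by
    intro y
    obtain ⟨x, rfl⟩ := Submodule.Quotient.mk_surjective _ y
    set c : ℚ := (x:ℚ) with hc
    have hden0 : ((c.den:ℚ)) ≠ 0 := Nat.cast_ne_zero.mpr c.den_nz
    have hnd : (c.num:ℚ) = c * c.den := (div_eq_iff hden0).mp (Rat.num_div_den c)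
    refine ⟨c.den * a, by positivity, ?_⟩
    rw [← Submodule.Quotient.mk_smul, Submodule.Quotient.mk_eq_zero]
    refine Submodule.mem_span_singleton.mpr ⟨c.num, ?_⟩
    apply Subtype.ext
    push_cast [zsmul_eq_mul]
    rw [hnd]
    ring
  have hcompl := tor3_isCompl aelt htor
  obtain ⟨φ, hφ⟩ := hd Ka Ka hsmall hsmall (eta3 aelt hcompl) (eta3_surj aelt hcompl)
    (by rw [eta3_ker]; exact isSmall_bot)
  have hEval : ∀ x : ↥G, Ka.mkQ (φ x) = eta3 aelt hcompl (Ka.mkQ x) := by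
    intro x
    have := LinearMap.ext_iff.mp hφ x
    simpa using this
  set one : ↥G := ⟨(1:ℚ), by exact_mod_cast hZ 1⟩ with hone
  set r : ↥G := φ one with hr
  have hmul : ∀ x : ↥G, ((φ x : ↥G):ℚ) = (r:ℚ) * (x:ℚ) := by
    intro x
    set c : ℚ := (x:ℚ) with hc
    have hden0 : ((c.den:ℚ)) ≠ 0 := Nat.cast_ne_zero.mpr c.den_nz
    have hnd : (c.num:ℚ) = c * c.den := (div_eq_iff hden0).mp (Rat.num_div_den c)
    have h1 : ((c.den:ℤ)) • x = c.num • one := by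
      apply Subtype.ext
      push_cast [zsmul_eq_mul]
      rw [hnd]; ring
    have h2 : ((c.den:ℤ)) • φ x = c.num • r := by
      rw [← map_smul, h1, map_smul]
    have h3 : (c.den:ℚ) * ((φ x : ↥G):ℚ) = (c.num:ℚ) * (r:ℚ) := by
      have := congrArg Subtype.val h2
      push_cast [zsmul_eq_mul] at this
      exact this
    apply mul_left_cancel₀ hden0
    rw [h3, hnd]
    ring
  -- evaluate at x₃ = b
  have hbG : ((b:ℕ):ℚ) ∈ G := by exact_mod_cast hZ (b:ℤ)
  set x₃ : ↥G := ⟨(b:ℚ), hbG⟩ with hx₃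
  have h3x : (3:ℤ) • x₃ = aelt := by
    apply Subtype.ext
    push_cast [zsmul_eq_mul, ha]
    rw [hx₃, haelt]; push_cast [ha]
    ring
  have hx₃tor : Ka.mkQ x₃ ∈ tor3 aelt := by
    refine ⟨1, ?_⟩
    rw [pow_one, ← map_smul, h3x]
    show Ka.mkQ aelt = 0
    rw [Submodule.mkQ_apply, Submodule.Quotient.mk_eq_zero]
    exact mem_span_singleton_self aelt
  obtain ⟨m, hm⟩ : ∃ m : ℤ, m • aelt = φ x₃ - (x₃ + x₃) := by
    apply Submodule.mem_span_singleton.mp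
    rw [← Submodule.Quotient.mk_eq_zero]
    have := hEval x₃
    rw [eta3_apply_tor aelt hcompl hx₃tor] at this
    rw [show Submodule.Quotient.mk (p := Ka) (φ x₃ - (x₃ + x₃))
      = Ka.mkQ (φ x₃ - (x₃ + x₃)) from rfl]
    rw [map_sub, this, map_add]
    abel
  have hval : (m:ℚ) * a = (r:ℚ) * b - 2 * b := by
    have := congrArg Subtype.val hm
    push_cast [zsmul_eq_mul] at this
    rw [hmul x₃] at this
    push_cast at this
    linarith [this]
  have hrval : (r:ℚ) = ((3*m + 2 : ℤ):ℚ) := by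
    apply mul_right_cancel₀ hbQ0
    push_cast [ha] at hval ⊢
    linarith [hval]
  set R : ℤ := 3*m + 2 with hR
  -- choose a large prime q
  obtain ⟨q, hqge, hq⟩ := Nat.exists_infinite_primes (S.sup _root_.id + (R-1).natAbs + 4)
  have hqS : q ∉ S := by
    intro hmem
    have := Finset.le_sup (f := _root_.id) hmem
    simp only [_root_.id] at this
    omega
  have hq3 : ¬ (3:ℤ) ∣ (q:ℤ) := by
    intro h
    have h3q : 3 ∣ q := by exact_mod_cast h
    have := (Nat.prime_dvd_prime_iff_eq (by norm_num) hq).mp h3q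
    omega
  obtain ⟨xq, hxv, hxs⟩ := hxq q hq
  have hxqcot : Ka.mkQ xq ∈ cotor3 aelt := by
    refine ⟨(q:ℤ), Int.prime_three.coprime_iff_not_dvd.mpr hq3, ?_⟩
    rw [← map_smul, hxs]
    show Ka.mkQ aelt = 0
    rw [Submodule.mkQ_apply, Submodule.Quotient.mk_eq_zero]
    exact mem_span_singleton_self aelt
  obtain ⟨m', hm'⟩ : ∃ m' : ℤ, m' • aelt = φ xq - xq := by
    apply Submodule.mem_span_singleton.mp
    rw [← Submodule.Quotient.mk_eq_zero]
    have := hEval xq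
    rw [eta3_apply_cotor aelt hcompl hxqcot] at this
    rw [show Submodule.Quotient.mk (p := Ka) (φ xq - xq)
      = Ka.mkQ (φ xq - xq) from rfl]
    rw [map_sub, this]
    abel
  have hq0 : ((q:ℚ)) ≠ 0 := Nat.cast_ne_zero.mpr hq.pos.ne'
  have hval' : (m':ℚ) * q = (R:ℚ) - 1 := by
    have := congrArg Subtype.val hm'
    push_cast [zsmul_eq_mul] at this
    rw [hmul xq, hxv, hrval] at this
    -- this : m' * a = R * (a/q) - a/q
    have h2 : (m':ℚ) * a * q = ((R:ℚ) - 1) * a := by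
      field_simp at this
      push_cast at this ⊢
      linarith [this]
    have h3 := mul_right_cancel₀ haQ0 (by linarith [h2] : (m':ℚ) * q * a = ((R:ℚ) - 1) * a)
    exact h3
  have hint : (m' * q : ℤ) = R - 1 := by exact_mod_cast hval'
  have hR1 : R - 1 ≠ 0 := by omega
  have hm'0 : m' ≠ 0 := by
    intro h; rw [h] at hint; simp at hint; omega
  have hnatabs : (R-1).natAbs = m'.natAbs * q := by
    rw [← hint, Int.natAbs_mul, Int.natAbs_natCast]
  have h1 : 1 ≤ m'.natAbs := Int.natAbs_pos.mpr hm'0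
  have h2 : q ≤ m'.natAbs * q := Nat.le_mul_of_pos_left q (by omega)
  omega

end Finite


/-- For a subgroup G of ℚ containing ℤ, the following are equivalent:
(i) G is dual automorphism-invariant as a ℤ-module;
(ii) the set of primes p with G_p = {x ∈ G : pⁿ·x ∈ ℤ for some n} = ℤ is infinite;
(iii) the Jacobson radical of G (the sum of all small subgroups) is zero. -/
theorem subgroup_of_rat_dualAutoInv_tfae
    (G : AddSubgroup ℚ) (hZ : ∀ m : ℤ, (m : ℚ) ∈ G) :
    List.TFAE
      [IsDualAutoInv ℤ G,
       {p : ℕ | p.Prime ∧ ∀ x : ℚ, x ∈ G →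
          (∃ (n : ℕ) (m : ℤ), (p : ℚ) ^ n * x = (m : ℚ)) → ∃ m : ℤ, x = (m : ℚ)}.Infinite,
       sSup {N : Submodule ℤ G | IsSmall N} = ⊥] := by
  have hTS : {p : ℕ | p.Prime ∧ ∀ x : ℚ, x ∈ G →
          (∃ (n : ℕ) (m : ℤ), (p : ℚ) ^ n * x = (m : ℚ)) → ∃ m : ℤ, x = (m : ℚ)}
      = {p : ℕ | p.Prime ∧ (1:ℚ)/p ∉ G} := by
    ext p
    simp only [Set.mem_setOf_eq]
    exact and_congr_right fun hp => pred_iff hZ hp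
  tfae_have 1 → 2 := by
    intro h1
    rw [hTS]
    by_contra hinf
    obtain ⟨N, hN, hNne, hnd⟩ := main_finite hZ (Set.not_infinite.mp hinf)
    exact hnd h1
  tfae_have 2 → 3 := by
    intro h2
    rw [hTS] at h2
    rw [sSup_eq_bot]
    exact fun N hN => small_eq_bot hZ h2 hN
  tfae_have 3 → 1 := by
    intro h3 K₁ K₂ h1 h2 η hsurj hker
    have hK1 : K₁ = ⊥ := le_bot_iff.mp (h3 ▸ le_sSup h1)
    have hK2 : K₂ = ⊥ := le_bot_iff.mp (h3 ▸ le_sSup h2)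
    subst hK1; subst hK2
    refine ⟨(Submodule.quotEquivOfEqBot ⊥ rfl).toLinearMap ∘ₗ η ∘ₗ (⊥ : Submodule ℤ ↥G).mkQ, ?_⟩
    ext x
    simp only [LinearMap.comp_apply, Submodule.mkQ_apply, LinearEquiv.coe_coe]
    obtain ⟨z, hz⟩ := Submodule.Quotient.mk_surjective _ (η (Submodule.Quotient.mk x))
    rw [← hz, Submodule.quotEquivOfEqBot_apply_mk]
  tfae_finish
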